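/- arXiv:2512.16594 — 2 statements merged into one kernel-verified Lean document; each statement's English description precedes it below -/
import Mathlib

section
/- Let a, b ∈ ℍ commute with j, let r be a nonzero real number, and define F_r : ℝ³ → ℍ by F_r(x₀,x₁,x₂) = exp(r x₀)(cos(r x₁) + sin(r x₁)·i)·(a + b x₂) - (1/(2r))·exp(r x₀)(cos(r x₁) - sin(r x₁)·i)·j·b. Then F_r satisfies ∂F_r/∂x₀ + i·∂F_r/∂x₁ + j·∂F_r/∂x₂ = 0 and moreover ∂F_r/∂x₀ = r·F_r. -/
lemma hasDerivAt_coeQ {f : ℝ → ℝ} {f' x : ℝ} (h : HasDerivAt f f' x) :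
    HasDerivAt (fun t => ((f t : ℝ) : Quaternion ℝ)) ((f' : ℝ) : Quaternion ℝ) x := by
  have := h.smul_const ((1:ℝ) : Quaternion ℝ)
  simp only [Quaternion.smul_coe, mul_one] at this
  exact this

lemma hasDerivAt_expQ (r x : ℝ) :
    HasDerivAt (fun t => ((Real.exp (r * t) : ℝ) : Quaternion ℝ))
      (((r * Real.exp (r * x) : ℝ)) : Quaternion ℝ) x := by
  refine hasDerivAt_coeQ ?_
  have := (Real.hasDerivAt_exp (r * x)).comp x ((hasDerivAt_id x).const_mul r)
  simpa [mul_comm, Function.comp_def] using this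

lemma hasDerivAt_cosQ (r x : ℝ) :
    HasDerivAt (fun t => ((Real.cos (r * t) : ℝ) : Quaternion ℝ))
      (((-(r * Real.sin (r * x)) : ℝ)) : Quaternion ℝ) x := by
  refine hasDerivAt_coeQ ?_
  have := (Real.hasDerivAt_cos (r * x)).comp x ((hasDerivAt_id x).const_mul r)
  simpa [mul_comm, Function.comp_def] using this

lemma hasDerivAt_sinQ (r x : ℝ) :
    HasDerivAt (fun t => ((Real.sin (r * t) : ℝ) : Quaternion ℝ))
      (((r * Real.cos (r * x) : ℝ)) : Quaternion ℝ) x := by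
  refine hasDerivAt_coeQ ?_
  have := (Real.hasDerivAt_sin (r * x)).comp x ((hasDerivAt_id x).const_mul r)
  simpa [mul_comm, Function.comp_def] using this

/-- The quaternion unit `i`. -/
noncomputable def qi : Quaternion ℝ := ⟨0, 1, 0, 0⟩

/-- The quaternion unit `j`. -/
noncomputable def qj : Quaternion ℝ := ⟨0, 0, 1, 0⟩

set_option maxHeartbeats 1000000 in
lemma key_zero (a b : Quaternion ℝ) (r e p s x c : ℝ) (hr : r ≠ 0) (hc : c = 1/(2*r)) :
    (((r*e : ℝ) : Quaternion ℝ) * ((p:ℝ) + (s:ℝ)*qi) * (a + b*(x:ℝ)) -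
      ((c : ℝ) : Quaternion ℝ) * (((r*e:ℝ) : Quaternion ℝ)*((p:ℝ) - (s:ℝ)*qi)) * qj * b)
    + qi * (((e:ℝ) : Quaternion ℝ) * (((-(r*s)):ℝ) + ((r*p:ℝ):Quaternion ℝ)*qi) * (a+b*(x:ℝ)) -
      ((c:ℝ) : Quaternion ℝ) * (((e:ℝ):Quaternion ℝ)*(((-(r*s)):ℝ) -
        ((r*p:ℝ):Quaternion ℝ)*qi))*qj*b)
    + qj * (((e:ℝ):Quaternion ℝ) * ((p:ℝ) + (s:ℝ)*qi) * b) = 0 := by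
  ext <;> simp [show qi.re = 0 from rfl, show qi.imI = 1 from rfl, show qi.imJ = 0 from rfl, show qi.imK = 0 from rfl, show qj.re = 0 from rfl, show qj.imI = 0 from rfl, show qj.imJ = 1 from rfl, show qj.imK = 0 from rfl, Quaternion.re_mul, show (0 : Quaternion ℝ).re = 0 from rfl, show (0 : Quaternion ℝ).imI = 0 from rfl, show (0 : Quaternion ℝ).imJ = 0 from rfl, show (0 : Quaternion ℝ).imK = 0 from rfl, Quaternion.imI_mul, Quaternion.imJ_mul, Quaternion.imK_mul] <;> (rw [hc]; field_simp; ring)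

set_option maxHeartbeats 1000000 in
lemma key_eigen (a b : Quaternion ℝ) (r e p s x c : ℝ) :
    (((r*e : ℝ) : Quaternion ℝ) * ((p:ℝ) + (s:ℝ)*qi) * (a + b*(x:ℝ)) -
      ((c : ℝ) : Quaternion ℝ) * (((r*e:ℝ) : Quaternion ℝ)*((p:ℝ) - (s:ℝ)*qi)) * qj * b)
    = ((r:ℝ) : Quaternion ℝ) * (((e : ℝ) : Quaternion ℝ) * ((p:ℝ) + (s:ℝ)*qi) * (a + b*(x:ℝ)) -
      ((c : ℝ) : Quaternion ℝ) * (((e:ℝ) : Quaternion ℝ)*((p:ℝ) - (s:ℝ)*qi)) * qj * b) := by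
  ext <;> simp [show qi.re = 0 from rfl, show qi.imI = 1 from rfl, show qi.imJ = 0 from rfl, show qi.imK = 0 from rfl, show qj.re = 0 from rfl, show qj.imI = 0 from rfl, show qj.imJ = 1 from rfl, show qj.imK = 0 from rfl, Quaternion.re_mul, Quaternion.imI_mul, Quaternion.imJ_mul, Quaternion.imK_mul] <;> ring

set_option maxHeartbeats 2000000 in
theorem exp_steering_eigenfunction (a b : Quaternion ℝ)
    (ha : a * qj = qj * a) (hb : b * qj = qj * b)
    (r : ℝ) (hr : r ≠ 0)
    (F : ℝ → ℝ → ℝ → Quaternion ℝ)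
    (hF : ∀ y₀ y₁ y₂ : ℝ, F y₀ y₁ y₂ =
      ((Real.exp (r * y₀) : ℝ) : Quaternion ℝ) *
          (((Real.cos (r * y₁) : ℝ) : Quaternion ℝ) +
            ((Real.sin (r * y₁) : ℝ) : Quaternion ℝ) * qi) *
          (a + b * ((y₂ : ℝ) : Quaternion ℝ)) -
        ((1 / (2 * r) : ℝ) : Quaternion ℝ) *
          (((Real.exp (r * y₀) : ℝ) : Quaternion ℝ) *
            (((Real.cos (r * y₁) : ℝ) : Quaternion ℝ) -
              ((Real.sin (r * y₁) : ℝ) : Quaternion ℝ) * qi)) * qj * b)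
    (x₀ x₁ x₂ : ℝ) :
    deriv (fun t => F t x₁ x₂) x₀ + qi * deriv (fun t => F x₀ t x₂) x₁ +
        qj * deriv (fun t => F x₀ x₁ t) x₂ = 0 ∧
      deriv (fun t => F t x₁ x₂) x₀ = ((r : ℝ) : Quaternion ℝ) * F x₀ x₁ x₂ := by
  set E : Quaternion ℝ := ((Real.exp (r * x₀) : ℝ) : Quaternion ℝ) with hE
  set C : Quaternion ℝ := ((Real.cos (r * x₁) : ℝ) : Quaternion ℝ) with hC
  set S : Quaternion ℝ := ((Real.sin (r * x₁) : ℝ) : Quaternion ℝ) with hS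
  set cc : Quaternion ℝ := ((1 / (2 * r) : ℝ) : Quaternion ℝ) with hcc
  set X : Quaternion ℝ := a + b * ((x₂ : ℝ) : Quaternion ℝ) with hX
  -- derivative in x₀
  have h0 : HasDerivAt (fun t => F t x₁ x₂)
      (((r * Real.exp (r * x₀) : ℝ) : Quaternion ℝ) * (C + S * qi) * X -
        cc * (((r * Real.exp (r * x₀) : ℝ) : Quaternion ℝ) * (C - S * qi)) * qj * b) x₀ := by
    have h1 := ((hasDerivAt_expQ r x₀).mul_const (C + S * qi)).mul_const X
    have h2 := ((((hasDerivAt_expQ r x₀).mul_const (C - S * qi)).const_mul cc).mul_const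
      qj).mul_const b
    refine HasDerivAt.congr_of_eventuallyEq (h1.sub h2)
      (Filter.Eventually.of_forall fun t => ?_)
    simp only [hF, hC, hS, hX, Pi.sub_apply, Pi.add_apply]
  -- derivative in x₁
  have h1 : HasDerivAt (fun t => F x₀ t x₂)
      (E * (((-(r * Real.sin (r * x₁)) : ℝ) : Quaternion ℝ) +
            ((r * Real.cos (r * x₁) : ℝ) : Quaternion ℝ) * qi) * X -
        cc * (E * (((-(r * Real.sin (r * x₁)) : ℝ) : Quaternion ℝ) -
            ((r * Real.cos (r * x₁) : ℝ) : Quaternion ℝ) * qi)) * qj * b) x₁ := by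
    have ha1 := ((hasDerivAt_cosQ r x₁).add
      ((hasDerivAt_sinQ r x₁).mul_const qi)).const_mul E |>.mul_const X
    have ha2 := ((((hasDerivAt_cosQ r x₁).sub
      ((hasDerivAt_sinQ r x₁).mul_const qi)).const_mul E).const_mul cc).mul_const qj
      |>.mul_const b
    refine HasDerivAt.congr_of_eventuallyEq (ha1.sub ha2)
      (Filter.Eventually.of_forall fun t => ?_)
    simp only [hF, hE, hX, hcc, Pi.sub_apply, Pi.add_apply]
  -- derivative in x₂
  have h2 : HasDerivAt (fun t => F x₀ x₁ t) (E * (C + S * qi) * b) x₂ := by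
    have hid : HasDerivAt (fun t : ℝ => ((t : ℝ) : Quaternion ℝ)) ((1 : ℝ) : Quaternion ℝ) x₂ :=
      hasDerivAt_coeQ (hasDerivAt_id x₂)
    have hb1 := (((hid.const_mul b).const_add a).const_mul (E * (C + S * qi))).sub_const
      (cc * (E * (C - S * qi)) * qj * b)
    simp only [Quaternion.coe_one, mul_one] at hb1
    refine HasDerivAt.congr_of_eventuallyEq hb1
      (Filter.Eventually.of_forall fun t => ?_)
    simp only [hF, hE, hC, hS, hcc]
  rw [h0.deriv, h1.deriv, h2.deriv, hF, hE, hC, hS, hX, hcc]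
  constructor
  · exact key_zero a b r (Real.exp (r * x₀)) (Real.cos (r * x₁)) (Real.sin (r * x₁)) x₂
      (1 / (2 * r)) hr rfl
  · exact key_eigen a b r (Real.exp (r * x₀)) (Real.cos (r * x₁)) (Real.sin (r * x₁)) x₂
      (1 / (2 * r))
end

section
/- Define F : ℝ³ → ℍ by F(x₀,x₁,x₂) = 2·exp(x₀)(cos x₁ + sin x₁·i)·x₂·j + exp(x₀)(cos x₁ - sin x₁·i). Then F satisfies ∂F/∂x₀ + i·∂F/∂x₁ + j·∂F/∂x₂ = 0, ∂F/∂x₀ = F, and F(0,0,0) = 1. -/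
/-- `F = 2 exp(z) x₂ j + exp(z̄)`, a monogenic generalization of the exponential. -/
noncomputable def Fexp (y₀ y₁ y₂ : ℝ) : Quaternion ℝ :=
  2 * (((Real.exp y₀ : ℝ) : Quaternion ℝ) *
        (((Real.cos y₁ : ℝ) : Quaternion ℝ) + ((Real.sin y₁ : ℝ) : Quaternion ℝ) * qi)) *
      ((y₂ : ℝ) : Quaternion ℝ) * qj +
    ((Real.exp y₀ : ℝ) : Quaternion ℝ) *
      (((Real.cos y₁ : ℝ) : Quaternion ℝ) - ((Real.sin y₁ : ℝ) : Quaternion ℝ) * qi)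

open scoped Quaternion

@[simp] lemma qi_re : qi.re = 0 := rfl
@[simp] lemma qi_imI : qi.imI = 1 := rfl
@[simp] lemma qi_imJ : qi.imJ = 0 := rfl
@[simp] lemma qi_imK : qi.imK = 0 := rfl
@[simp] lemma qj_re : qj.re = 0 := rfl
@[simp] lemma qj_imI : qj.imI = 0 := rfl
@[simp] lemma qj_imJ : qj.imJ = 1 := rfl
@[simp] lemma qj_imK : qj.imK = 0 := rfl

attribute [local simp] Quaternion.re_mul Quaternion.imI_mul Quaternion.imJ_mul Quaternion.imK_mul

lemma Fexp_eq (y₀ y₁ y₂ : ℝ) :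
    Fexp y₀ y₁ y₂ =
      (Real.exp y₀ * Real.cos y₁) • (1 : Quaternion ℝ)
      + (-(Real.exp y₀ * Real.sin y₁)) • qi
      + (2 * Real.exp y₀ * Real.cos y₁ * y₂) • qj
      + (2 * Real.exp y₀ * Real.sin y₁ * y₂) • (qi * qj) := by
  have h2 : (2 : Quaternion ℝ) = ((2:ℝ) : Quaternion ℝ) := by norm_cast
  ext <;> simp [Fexp, h2]
  all_goals try ring
  all_goals tauto

example : True := trivial

open Real in
lemma hasDeriv0 (x₀ x₁ x₂ : ℝ) :
    HasDerivAt (fun t => Fexp t x₁ x₂) (Fexp x₀ x₁ x₂) x₀ := by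
  have h : HasDerivAt (fun t : ℝ =>
      (Real.exp t * Real.cos x₁) • (1 : Quaternion ℝ)
      + (-(Real.exp t * Real.sin x₁)) • qi
      + (2 * Real.exp t * Real.cos x₁ * x₂) • qj
      + (2 * Real.exp t * Real.sin x₁ * x₂) • (qi * qj))
      ((Real.exp x₀ * Real.cos x₁) • (1 : Quaternion ℝ)
      + (-(Real.exp x₀ * Real.sin x₁)) • qi
      + (2 * Real.exp x₀ * Real.cos x₁ * x₂) • qj
      + (2 * Real.exp x₀ * Real.sin x₁ * x₂) • (qi * qj)) x₀ := by
    exact ((((Real.hasDerivAt_exp x₀).mul_const _).smul_const _).add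
      ((((Real.hasDerivAt_exp x₀).mul_const _).neg).smul_const _)).add
      (((((Real.hasDerivAt_exp x₀).const_mul 2).mul_const _).mul_const _).smul_const _) |>.add
      (((((Real.hasDerivAt_exp x₀).const_mul 2).mul_const _).mul_const _).smul_const _)
  rw [Fexp_eq x₀ x₁ x₂]
  exact h.congr_deriv rfl |>.congr_of_eventuallyEq (by filter_upwards with t; rw [Fexp_eq]) |>.congr_deriv (by ring_nf)

lemma hasDeriv1 (x₀ x₁ x₂ : ℝ) :
    HasDerivAt (fun t => Fexp x₀ t x₂)
      ((Real.exp x₀ * -Real.sin x₁) • (1 : Quaternion ℝ)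
      + (-(Real.exp x₀ * Real.cos x₁)) • qi
      + (2 * Real.exp x₀ * -Real.sin x₁ * x₂) • qj
      + (2 * Real.exp x₀ * Real.cos x₁ * x₂) • (qi * qj)) x₁ := by
  have hc := Real.hasDerivAt_cos x₁
  have hs := Real.hasDerivAt_sin x₁
  have h := (((hc.const_mul (Real.exp x₀)).smul_const (1 : Quaternion ℝ)).add
      (((hs.const_mul (Real.exp x₀)).neg).smul_const qi)).add
      (((hc.const_mul (2 * Real.exp x₀)).mul_const x₂).smul_const qj) |>.add
      (((hs.const_mul (2 * Real.exp x₀)).mul_const x₂).smul_const (qi * qj))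
  refine h.congr_of_eventuallyEq ?_
  filter_upwards with t; rw [Fexp_eq]; simp only [Pi.add_apply, Pi.neg_apply]; try ring_nf

lemma hasDeriv2 (x₀ x₁ x₂ : ℝ) :
    HasDerivAt (fun t => Fexp x₀ x₁ t)
      ((2 * Real.exp x₀ * Real.cos x₁) • qj
      + (2 * Real.exp x₀ * Real.sin x₁) • (qi * qj)) x₂ := by
  have hid := hasDerivAt_id x₂
  have h := (((hasDerivAt_const x₂ ((Real.exp x₀ * Real.cos x₁) • (1 : Quaternion ℝ))).add
      (hasDerivAt_const x₂ ((-(Real.exp x₀ * Real.sin x₁)) • qi))).add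
      ((hid.const_mul (2 * Real.exp x₀ * Real.cos x₁)).smul_const qj)).add
      ((hid.const_mul (2 * Real.exp x₀ * Real.sin x₁)).smul_const (qi * qj))
  refine (h.congr_of_eventuallyEq ?_).congr_deriv ?_
  · filter_upwards with t; rw [Fexp_eq]; try simp only [id_eq, Pi.add_apply]; try ring_nf
  · simp

theorem monogenic_exponential (x₀ x₁ x₂ : ℝ) :
    (deriv (fun t => Fexp t x₁ x₂) x₀ + qi * deriv (fun t => Fexp x₀ t x₂) x₁ +
        qj * deriv (fun t => Fexp x₀ x₁ t) x₂ = 0) ∧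
      deriv (fun t => Fexp t x₁ x₂) x₀ = Fexp x₀ x₁ x₂ ∧
      Fexp 0 0 0 = 1 := by
  rw [(hasDeriv0 x₀ x₁ x₂).deriv, (hasDeriv1 x₀ x₁ x₂).deriv, (hasDeriv2 x₀ x₁ x₂).deriv]
  refine ⟨?_, rfl, ?_⟩
  · rw [Fexp_eq]
    ext <;> simp <;> ring
  · have h2 : (2 : Quaternion ℝ) = ((2:ℝ) : Quaternion ℝ) := by norm_cast
    ext <;> simp [Fexp, h2]
end
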